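/- Geometric trace growth lower bound: if A is an n×n real matrix with an eigenvalue λ satisfying |λ| > 1, Q ⪰ 0, and X ⪰ εI for some ε > 0, then Tr(h^ℓ(X)) ≥ ε·|λ|^{2ℓ} for all ℓ ≥ 0, where h(X) = A X Aᵀ + Q; in particular Tr(h^ℓ(X)) → ∞. -/

import Mathlib

open Matrix Filter

theorem eigvec' {n : ℕ} (M : Matrix (Fin n) (Fin n) ℂ) (μ : ℂ) (h : μ ∈ spectrum ℂ M) :
    ∃ v ≠ 0, M *ᵥ v = μ • v := by
  rw [spectrum.mem_iff] at h
  rw [Matrix.isUnit_iff_isUnit_det, isUnit_iff_ne_zero, not_not] at h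
  obtain ⟨v, hv0, hv⟩ := (Matrix.exists_mulVec_eq_zero_iff).2 h
  refine ⟨v, hv0, ?_⟩
  rw [sub_mulVec, Algebra.algebraMap_eq_smul_one, smul_mulVec, one_mulVec,
    sub_eq_zero] at hv
  exact hv.symm

theorem abs_sq_le_trace' {n : ℕ} (B : Matrix (Fin n) (Fin n) ℝ) (μ : ℂ) (v : Fin n → ℂ)
    (hv0 : v ≠ 0) (hv : (B.map (Complex.ofReal ·)) *ᵥ v = μ • v) :
    ‖μ‖ ^ 2 ≤ (B * Bᵀ).trace := by
  set S : ℝ := ∑ j, ‖v j‖ ^ 2 with hS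
  have hSpos : 0 < S := by
    obtain ⟨j, hj⟩ := Function.ne_iff.mp hv0
    refine Finset.sum_pos' (fun i _ => by positivity) ⟨j, Finset.mem_univ j, by
      have := norm_pos_iff.mpr hj; positivity⟩
  set T : ℝ := (B * Bᵀ).trace with hT
  have hTsum : T = ∑ i, ∑ j, B i j ^ 2 := by
    simp [hT, Matrix.trace, Matrix.mul_apply, Matrix.diag, sq]
  have key : ∀ i, ‖μ * v i‖ ^ 2 ≤ (∑ j, B i j ^ 2) * S := by
    intro i
    have hz : μ * v i = ∑ j, (B i j : ℂ) * v j := by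
      have := congrFun hv i
      simpa [Matrix.mulVec, dotProduct, Matrix.map_apply, Pi.smul_apply,
        smul_eq_mul] using this.symm
    rw [hz, Complex.sq_norm, Complex.normSq_apply]
    have hre : (∑ j, (B i j : ℂ) * v j).re = ∑ j, B i j * (v j).re := by
      simp [Complex.re_sum]
    have him : (∑ j, (B i j : ℂ) * v j).im = ∑ j, B i j * (v j).im := by
      simp [Complex.im_sum]
    rw [hre, him]
    have c1 := Finset.sum_mul_sq_le_sq_mul_sq Finset.univ (fun j => B i j) (fun j => (v j).re)
    have c2 := Finset.sum_mul_sq_le_sq_mul_sq Finset.univ (fun j => B i j) (fun j => (v j).im)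
    have hSsplit : S = (∑ j, (v j).re ^ 2) + ∑ j, (v j).im ^ 2 := by
      rw [hS, ← Finset.sum_add_distrib]
      refine Finset.sum_congr rfl fun j _ => ?_
      rw [Complex.sq_norm, Complex.normSq_apply]; ring
    calc (∑ j, B i j * (v j).re) * (∑ j, B i j * (v j).re)
          + (∑ j, B i j * (v j).im) * (∑ j, B i j * (v j).im)
        = (∑ j, B i j * (v j).re) ^ 2 + (∑ j, B i j * (v j).im) ^ 2 := by ring
      _ ≤ (∑ j, B i j ^ 2) * (∑ j, (v j).re ^ 2) + (∑ j, B i j ^ 2) * (∑ j, (v j).im ^ 2) :=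
          add_le_add c1 c2
      _ = (∑ j, B i j ^ 2) * S := by rw [hSsplit]; ring
  have hsum : ‖μ‖ ^ 2 * S ≤ T * S := by
    calc ‖μ‖ ^ 2 * S = ∑ i, ‖μ * v i‖ ^ 2 := by
          simp [hS, Finset.mul_sum, norm_mul, mul_pow]
      _ ≤ ∑ i, (∑ j, B i j ^ 2) * S := Finset.sum_le_sum fun i _ => key i
      _ = T * S := by rw [hTsum, Finset.sum_mul]
  exact le_of_mul_le_mul_right hsum hSpos

theorem psd_trace_nonneg' {n : ℕ} {M : Matrix (Fin n) (Fin n) ℝ} (h : M.PosSemidef) :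
    0 ≤ M.trace := by
  rw [Matrix.trace]
  apply Finset.sum_nonneg
  intro i _
  exact h.diag_nonneg

/-- Geometric trace growth: if `A` has a (complex) eigenvalue `λ` with `|λ| > 1`, `Q ⪰ 0`
and `X ⪰ ε I` with `ε > 0`, then `Tr(h^ℓ(X)) ≥ ε |λ|^{2ℓ}` where `h(X) = A X Aᵀ + Q`;
in particular the trace tends to infinity. -/
theorem trace_geometric_growth {n : ℕ} (A Q X : Matrix (Fin n) (Fin n) ℝ)
    (lam : ℂ) (hlam : lam ∈ spectrum ℂ (A.map (Complex.ofReal ·)))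
    (habs : 1 < ‖lam‖)
    (hQ : Q.PosSemidef) (ε : ℝ) (hε : 0 < ε) (hX : X.IsHermitian)
    (hXε : (X - ε • (1 : Matrix (Fin n) (Fin n) ℝ)).PosSemidef) :
    (∀ ℓ : ℕ, ε * ‖lam‖ ^ (2 * ℓ) ≤ ((fun Z => A * Z * Aᵀ + Q)^[ℓ] X).trace) ∧
      Tendsto (fun ℓ : ℕ => ((fun Z => A * Z * Aᵀ + Q)^[ℓ] X).trace) atTop atTop := by
  obtain ⟨v, hv0, hv⟩ := eigvec' _ lam hlam
  set h : Matrix (Fin n) (Fin n) ℝ → Matrix (Fin n) (Fin n) ℝ := fun Z => A * Z * Aᵀ + Q with hh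
  -- eigenvector of powers
  have hpow : ∀ ℓ : ℕ, ((A ^ ℓ).map (Complex.ofReal ·)) *ᵥ v = lam ^ ℓ • v := by
    intro ℓ
    have hmap : ∀ k : ℕ, (A ^ k).map (Complex.ofReal ·) = (A.map (Complex.ofReal ·)) ^ k := by
      intro k
      induction k with
      | zero => simp [Matrix.map_one]
      | succ k ih =>
        rw [pow_succ, pow_succ, ← ih]
        ext i j
        simp [Matrix.mul_apply, Matrix.map_apply]
    rw [hmap]
    induction ℓ with
    | zero => simp
    | succ ℓ ih =>
      rw [pow_succ, ← Matrix.mulVec_mulVec, hv, Matrix.mulVec_smul, ih, pow_succ]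
      rw [smul_smul, mul_comm]
  -- PSD induction
  have hPSD : ∀ ℓ : ℕ, (h^[ℓ] X - A ^ ℓ * X * (A ^ ℓ)ᵀ).PosSemidef := by
    intro ℓ
    induction ℓ with
    | zero => simpa using Matrix.PosSemidef.zero
    | succ ℓ ih =>
      rw [Function.iterate_succ_apply']
      have key : h (h^[ℓ] X) - A ^ (ℓ + 1) * X * (A ^ (ℓ + 1))ᵀ
          = A * (h^[ℓ] X - A ^ ℓ * X * (A ^ ℓ)ᵀ) * Aᵀ + Q := by
        have e : A ^ (ℓ + 1) * X * (A ^ (ℓ + 1))ᵀ = A * (A ^ ℓ * X * (A ^ ℓ)ᵀ) * Aᵀ := by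
          rw [pow_succ', transpose_mul]
          simp [Matrix.mul_assoc]
        simp only [hh]
        rw [e, Matrix.mul_sub, Matrix.sub_mul]
        abel
      rw [key]
      have := (ih.mul_mul_conjTranspose_same A).add hQ
      rwa [Matrix.conjTranspose_eq_transpose_of_trivial] at this
  -- trace bound
  have htr : ∀ ℓ : ℕ, ε * ‖lam‖ ^ (2 * ℓ) ≤ (h^[ℓ] X).trace := by
    intro ℓ
    set B := A ^ ℓ with hB
    have h1 : (B * X * Bᵀ).trace ≤ (h^[ℓ] X).trace := by
      have := psd_trace_nonneg' (hPSD ℓ)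
      rw [Matrix.trace_sub] at this
      linarith
    have h2 : (B * (X - ε • (1 : Matrix (Fin n) (Fin n) ℝ)) * Bᵀ).PosSemidef := by
      have := hXε.mul_mul_conjTranspose_same B
      rwa [Matrix.conjTranspose_eq_transpose_of_trivial] at this
    have h3 : ε * (B * Bᵀ).trace ≤ (B * X * Bᵀ).trace := by
      have hexp : B * (X - ε • (1 : Matrix (Fin n) (Fin n) ℝ)) * Bᵀ
          = B * X * Bᵀ - ε • (B * Bᵀ) := by
        rw [Matrix.mul_sub, Matrix.sub_mul]
        congr 1
        rw [Matrix.mul_smul, Matrix.mul_one, Matrix.smul_mul]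
      have := psd_trace_nonneg' h2
      rw [hexp, Matrix.trace_sub, Matrix.trace_smul, smul_eq_mul] at this
      linarith
    have h4 : ‖lam‖ ^ (2 * ℓ) ≤ (B * Bᵀ).trace := by
      have := abs_sq_le_trace' B (lam ^ ℓ) v hv0 (hpow ℓ)
      rwa [norm_pow, ← pow_mul, mul_comm ℓ 2] at this
    calc ε * ‖lam‖ ^ (2 * ℓ) ≤ ε * (B * Bᵀ).trace := by
          exact mul_le_mul_of_nonneg_left h4 hε.le
      _ ≤ (B * X * Bᵀ).trace := h3
      _ ≤ (h^[ℓ] X).trace := h1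
  refine ⟨htr, ?_⟩
  have hgrow : Tendsto (fun ℓ : ℕ => ε * ‖lam‖ ^ (2 * ℓ)) atTop atTop := by
    have h1 : Tendsto (fun ℓ : ℕ => (‖lam‖ ^ 2) ^ ℓ) atTop atTop :=
      tendsto_pow_atTop_atTop_of_one_lt (by nlinarith)
    have h2 := h1.const_mul_atTop hε
    simpa [← pow_mul] using h2
  exact tendsto_atTop_mono htr hgrow
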